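/- Let ⟨·|·⟩ be a strong compatibility support mapping for S and D(X,A) = ⟨X|{1}⟩ ⊖ ⟨X|A∖X⟩. Then for finite U, V ⊆ S: if U ∩ V ≠ ∅ then ⟨U|V⟩ = D(U,U); and if U ∩ V = ∅ then ⟨U|V⟩ = ⊕_{∅≠Y⊆V} D(U∪Y, U∪V). -/

import Mathlib

universe u

/-- An effect algebra: a partial commutative, associative operation `add`
(modelled as an `Option`-valued total operation), with constants `zero`, `one`,
unique orthosupplements, and `a ⊕ 1` defined only for `a = 0`. -/
structure EffectAlgebra (α : Type u) where
  add : α → α → Option α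
  zero : α
  one : α
  add_comm : ∀ a b : α, add a b = add b a
  add_assoc : ∀ a b c ab abc : α, add a b = some ab → add ab c = some abc →
    ∃ bc : α, add b c = some bc ∧ add a bc = some abc
  orthosupp : ∀ a : α, ∃! a' : α, add a a' = some one
  add_one : ∀ a b : α, add a one = some b → a = zero

namespace EffectAlgebra

variable {α : Type u}

/-- The induced order: `a ≤ b` iff `∃ c, a ⊕ c = b`. -/
def le (E : EffectAlgebra α) (a b : α) : Prop := ∃ c, E.add a c = some b

/-- The orthosupplement `a'`. -/
noncomputable def compl (E : EffectAlgebra α) (a : α) : α :=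
  (E.orthosupp a).exists.choose

open Classical in
/-- The partial difference `b ⊖ a` (junk value `0` when `a ≤ b` fails). -/
noncomputable def sub (E : EffectAlgebra α) (b a : α) : α :=
  if h : ∃ c, E.add a c = some b then h.choose else E.zero

/-- Iterated partial sum of a list of elements. -/
noncomputable def osum (E : EffectAlgebra α) : List α → Option α
  | [] => some E.zero
  | a :: l => (E.osum l).bind fun s => E.add a s

end EffectAlgebra

namespace EffectAlgebra

variable {α : Type u}

/-- `f` is a compatibility support mapping for `S` (with `1 ∈ S`). -/
def IsCSM [DecidableEq α] (E : EffectAlgebra α) (S : Set α) (f : Finset α → Finset α → α) : Prop :=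
  E.one ∈ S ∧
  (∀ U V₁ V₂ : Finset α, ↑U ⊆ S → ↑V₁ ⊆ S → ↑V₂ ⊆ S → V₁ ⊆ V₂ →
    E.le (f U V₁) (f U V₂)) ∧
  (∀ U V : Finset α, ↑U ⊆ S → ↑V ⊆ S → E.le (f U V) (f U {E.one})) ∧
  (∀ U : Finset α, ↑U ⊆ S → f U ∅ = E.zero) ∧
  (∀ c ∈ S, f ∅ {c} = c) ∧
  (∀ (U V : Finset α) (c : α), ↑U ⊆ S → ↑V ⊆ S → c ∈ S → c ∉ U → c ∉ V →
    E.sub (f (insert c U) {E.one}) (f (insert c U) V) =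
      E.sub (f U (insert c V)) (f U V))

/-- `f` is a strong compatibility support mapping for `S`:
condition (e*) holds with no restriction on `c`. -/
def IsStrongCSM [DecidableEq α] (E : EffectAlgebra α) (S : Set α) (f : Finset α → Finset α → α) : Prop :=
  E.one ∈ S ∧
  (∀ U V₁ V₂ : Finset α, ↑U ⊆ S → ↑V₁ ⊆ S → ↑V₂ ⊆ S → V₁ ⊆ V₂ →
    E.le (f U V₁) (f U V₂)) ∧
  (∀ U V : Finset α, ↑U ⊆ S → ↑V ⊆ S → E.le (f U V) (f U {E.one})) ∧
  (∀ U : Finset α, ↑U ⊆ S → f U ∅ = E.zero) ∧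
  (∀ c ∈ S, f ∅ {c} = c) ∧
  (∀ (U V : Finset α) (c : α), ↑U ⊆ S → ↑V ⊆ S → c ∈ S →
    E.sub (f (insert c U) {E.one}) (f (insert c U) V) =
      E.sub (f U (insert c V)) (f U V))

/-- `D(X,A) = ⟨X|{1}⟩ ⊖ ⟨X|A∖X⟩`. -/
noncomputable def Dmap [DecidableEq α] (E : EffectAlgebra α)
    (f : Finset α → Finset α → α) (X A : Finset α) : α :=
  E.sub (f X {E.one}) (f X (A \ X))

end EffectAlgebra


namespace EffectAlgebra
variable {α : Type u} (E : EffectAlgebra α)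

theorem cancel {a b c t : α} (h1 : E.add a b = some t) (h2 : E.add a c = some t) : b = c := by
  obtain ⟨t', ht', _⟩ := E.orthosupp t
  obtain ⟨s, hs1, hs2⟩ := E.add_assoc a b t' t E.one h1 ht'
  obtain ⟨s', hs1', hs2'⟩ := E.add_assoc a c t' t E.one h2 ht'
  obtain ⟨u, hu, huu⟩ := E.orthosupp a
  have hss' : s' = s := (huu s' hs2').trans (huu s hs2).symm
  rw [hss'] at hs1' hs2'
  obtain ⟨r, hr1, hr2⟩ := E.add_assoc b t' a s E.one hs1 ((E.add_comm s a).trans hs2)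
  obtain ⟨r', hr1', hr2'⟩ := E.add_assoc c t' a s E.one hs1' ((E.add_comm s a).trans hs2')
  rw [hr1] at hr1'
  have hrr : r' = r := (Option.some.inj hr1').symm
  rw [hrr] at hr2'
  obtain ⟨w, hw, hww⟩ := E.orthosupp r
  exact (hww b ((E.add_comm r b).trans hr2)).trans (hww c ((E.add_comm r c).trans hr2')).symm

theorem one_add_zero : E.add E.one E.zero = some E.one := by
  obtain ⟨a', ha', _⟩ := E.orthosupp E.one
  have h : a' = E.zero := E.add_one a' E.one ((E.add_comm a' E.one).trans ha')
  rwa [h] at ha'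

theorem add_zero' (a : α) : E.add a E.zero = some a := by
  obtain ⟨a', ha', _⟩ := E.orthosupp a
  obtain ⟨bc, hbc, hbc2⟩ := E.add_assoc a' a E.zero E.one E.one
    ((E.add_comm a' a).trans ha') E.one_add_zero
  have h : bc = a := E.cancel hbc2 ((E.add_comm a' a).trans ha')
  rwa [h] at hbc

theorem zero_add' (a : α) : E.add E.zero a = some a := by
  rw [E.add_comm]; exact E.add_zero' a

theorem sub_eq {a b c : α} (h : E.add a c = some b) : E.sub b a = c := by
  have hex : ∃ c, E.add a c = some b := ⟨c, h⟩
  rw [sub, dif_pos hex]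
  exact E.cancel hex.choose_spec h

theorem sub_spec {a b : α} (h : E.le a b) : E.add a (E.sub b a) = some b := by
  obtain ⟨c, hc⟩ := h
  rw [E.sub_eq hc]; exact hc

theorem sub_zero' (b : α) : E.sub b E.zero = b := E.sub_eq (E.zero_add' b)

theorem sub_add_sub {a x b y t : α} (h1 : E.add a x = some b) (h2 : E.add b y = some t) :
    E.add y x = some (E.sub t a) := by
  obtain ⟨w, hw, hw2⟩ := E.add_assoc a x y b t h1 h2
  rw [E.sub_eq hw2, E.add_comm]; exact hw

end EffectAlgebra

namespace EffectAlgebra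
variable {α : Type u} (E : EffectAlgebra α)

/-- Total addition on `Option α`. -/
noncomputable def oadd (x y : Option α) : Option α :=
  x.bind fun a => y.bind fun b => E.add a b

@[simp] theorem oadd_some_some (a b : α) : E.oadd (some a) (some b) = E.add a b := rfl
@[simp] theorem oadd_none_left (y : Option α) : E.oadd none y = none := rfl
@[simp] theorem oadd_none_right (x : Option α) : E.oadd x none = none := by
  cases x <;> rfl

theorem grouping1 {a b c r : α} (h : ((E.add a b).bind fun x => E.add x c) = some r) :
    ((E.add b c).bind fun y => E.add a y) = some r := by
  obtain ⟨x, hx, hxc⟩ := Option.bind_eq_some_iff.mp h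
  obtain ⟨bc, hbc, habc⟩ := E.add_assoc a b c x r hx hxc
  rw [hbc]; exact habc

theorem grouping2 {a b c r : α} (h : ((E.add b c).bind fun y => E.add a y) = some r) :
    ((E.add a b).bind fun x => E.add x c) = some r := by
  obtain ⟨y, hy, hay⟩ := Option.bind_eq_some_iff.mp h
  obtain ⟨w, hw, hbw⟩ := E.add_assoc b c a y r hy ((E.add_comm y a).trans hay)
  obtain ⟨w2, hw2, hcw2⟩ := E.add_assoc c a b w r hw ((E.add_comm w b).trans hbw)
  rw [hw2]
  exact (E.add_comm w2 c).trans hcw2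

theorem oadd_assoc (x y z : Option α) : E.oadd (E.oadd x y) z = E.oadd x (E.oadd y z) := by
  rcases x with _ | a; · rfl
  rcases y with _ | b; · simp
  rcases z with _ | c; · simp
  show ((E.add a b).bind fun x => E.add x c) = ((E.add b c).bind fun y => E.add a y)
  rcases h1 : ((E.add a b).bind fun x => E.add x c) with _ | r
  · rcases h2 : ((E.add b c).bind fun y => E.add a y) with _ | r'
    · rfl
    · rw [E.grouping2 h2] at h1; exact h1.symm ▸ rfl
  · exact (E.grouping1 h1).symm

theorem oadd_comm (x y : Option α) : E.oadd x y = E.oadd y x := by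
  rcases x with _ | a
  · simp
  rcases y with _ | b
  · simp
  show E.add a b = E.add b a
  exact E.add_comm a b

theorem oadd_zero (x : Option α) : E.oadd x (some E.zero) = x := by
  rcases x with _ | a
  · rfl
  · show E.add a E.zero = some a
    exact E.add_zero' a

/-- `Option α` with `oadd` is a commutative monoid. -/
noncomputable def oMonoid : AddCommMonoid (Option α) :=
  letI : Add (Option α) := ⟨E.oadd⟩
  letI : Zero (Option α) := ⟨some E.zero⟩
  { add_assoc := E.oadd_assoc
    zero_add := fun x => (E.oadd_comm _ _).trans (E.oadd_zero x)
    add_zero := E.oadd_zero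
    add_comm := E.oadd_comm
    nsmul := nsmulRec
    nsmul_zero := fun _ => rfl
    nsmul_succ := fun _ _ => rfl }

theorem osum_eq_sum (l : List α) :
    E.osum l = (letI := E.oMonoid; (l.map some).sum) := by
  letI := E.oMonoid
  induction l with
  | nil => rfl
  | cons a l ih =>
    rw [List.map_cons, List.sum_cons, ← ih]
    show E.osum (a :: l) = E.oadd (some a) (E.osum l)
    rcases h : E.osum l with _ | s
    · simp [osum, h]
    · simp only [osum, h, Option.bind_some]
      rfl

end EffectAlgebra

section CSM
namespace EffectAlgebra
variable {α : Type u} [DecidableEq α] (E : EffectAlgebra α) {S : Set α}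
  {f : Finset α → Finset α → α}

theorem coe_sub {β : Type u} {S : Set β} {A B : Finset β} (h : A ⊆ B) (hB : ↑B ⊆ S) : ↑A ⊆ S :=
  fun x hx => hB (Finset.mem_coe.2 (h (Finset.mem_coe.1 hx)))

theorem Dmap_self (hf : E.IsStrongCSM S f) {U : Finset α} (hU : ↑U ⊆ S) :
    E.Dmap f U U = f U {E.one} := by
  obtain ⟨h1, hmono, hle1, hempty, hsingle, hstar⟩ := hf
  rw [Dmap, Finset.sdiff_self, hempty U hU, sub_zero']

theorem step (hf : E.IsStrongCSM S f) {X A : Finset α} {c : α} (hX : ↑X ⊆ S) (hA : ↑A ⊆ S)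
    (hc : c ∈ S) (hcX : c ∉ X) (hcA : c ∉ A) :
    E.add (E.Dmap f X (insert c A)) (E.Dmap f (insert c X) (insert c A)) =
      some (E.Dmap f X A) := by
  obtain ⟨h1, hmono, hle1, hempty, hsingle, hstar⟩ := hf
  have hAX : ↑(A \ X) ⊆ S := coe_sub Finset.sdiff_subset hA
  have hicAX : ↑(insert c (A \ X)) ⊆ S := by
    intro x hx
    rcases Finset.mem_insert.1 (Finset.mem_coe.1 hx) with h | h
    · exact h ▸ hc
    · exact hAX (Finset.mem_coe.2 h)
  have hab : E.le (f X (A \ X)) (f X (insert c (A \ X))) :=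
    hmono X (A \ X) (insert c (A \ X)) hX hAX hicAX (Finset.subset_insert c _)
  have hbt : E.le (f X (insert c (A \ X))) (f X {E.one}) := hle1 X _ hX hicAX
  have key := E.sub_add_sub (E.sub_spec hab) (E.sub_spec hbt)
  have e1 : insert c A \ X = insert c (A \ X) := Finset.insert_sdiff_of_notMem _ hcX
  have e2 : insert c A \ insert c X = A \ X := by
    ext x
    simp only [Finset.mem_sdiff, Finset.mem_insert, not_or]
    constructor
    · rintro ⟨h1 | h1, h2, h3⟩
      · exact absurd h1 h2
      · exact ⟨h1, h3⟩
    · rintro ⟨h1, h2⟩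
      exact ⟨Or.inr h1, fun hxc => hcA (hxc ▸ h1), h2⟩
  have e3 : E.Dmap f (insert c X) (insert c A) =
      E.sub (f X (insert c (A \ X))) (f X (A \ X)) := by
    rw [Dmap, e2]; exact hstar X (A \ X) c hX hAX hc
  rw [e3, Dmap, e1, Dmap]
  exact key

theorem remainder (hf : E.IsStrongCSM S f) {U V : Finset α} (hUV : U ∩ V = ∅)
    (hU : ↑U ⊆ S) (hV : ↑V ⊆ S) :
    E.add (f U V) (E.Dmap f U (U ∪ V)) = some (f U {E.one}) := by
  obtain ⟨h1, hmono, hle1, hempty, hsingle, hstar⟩ := hf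
  have e : (U ∪ V) \ U = V := by
    ext x
    simp only [Finset.mem_sdiff, Finset.mem_union]
    constructor
    · rintro ⟨h1 | h1, h2⟩
      · exact absurd h1 h2
      · exact h1
    · intro h1
      refine ⟨Or.inr h1, fun hxU => ?_⟩
      have : x ∈ U ∩ V := Finset.mem_inter.2 ⟨hxU, h1⟩
      rw [hUV] at this
      exact absurd this (Finset.notMem_empty x)
  rw [Dmap, e]
  exact E.sub_spec (hle1 U V hU hV)

theorem sumA (hf : E.IsStrongCSM S f) :
    ∀ V U : Finset α, U ∩ V = ∅ → ↑U ⊆ S → ↑V ⊆ S →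
    (letI := E.oMonoid;
      ∑ Y ∈ V.powerset, (some (E.Dmap f (U ∪ Y) (U ∪ V)) : Option α) = some (f U {E.one})) := by
  letI := E.oMonoid
  intro V
  induction V using Finset.induction_on with
  | empty =>
    intro U hUV hU _
    rw [Finset.powerset_empty, Finset.sum_singleton, Finset.union_empty]
    rw [E.Dmap_self hf hU]
  | @insert c V' hc ih =>
    intro U hUV hU hV
    have hcS : c ∈ S := hV (Finset.mem_coe.2 (Finset.mem_insert_self c V'))
    have hV' : ↑V' ⊆ S := coe_sub (Finset.subset_insert c V') hV
    have hcU : c ∉ U := by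
      intro h
      have : c ∈ U ∩ insert c V' := Finset.mem_inter.2 ⟨h, Finset.mem_insert_self c V'⟩
      rw [hUV] at this
      exact absurd this (Finset.notMem_empty c)
    have hUV' : U ∩ V' = ∅ := by
      apply Finset.eq_empty_iff_forall_notMem.2
      intro x hx
      have hx' : x ∈ U ∩ insert c V' := by
        rcases Finset.mem_inter.1 hx with ⟨h1, h2⟩
        exact Finset.mem_inter.2 ⟨h1, Finset.mem_insert_of_mem h2⟩
      rw [hUV] at hx'
      exact absurd hx' (Finset.notMem_empty x)
    rw [Finset.sum_powerset_insert hc, ← Finset.sum_add_distrib]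
    have hpt : ∀ Y ∈ V'.powerset,
        (some (E.Dmap f (U ∪ Y) (U ∪ insert c V')) +
          some (E.Dmap f (U ∪ insert c Y) (U ∪ insert c V')) : Option α) =
        some (E.Dmap f (U ∪ Y) (U ∪ V')) := by
      intro Y hY
      have hYV' : Y ⊆ V' := Finset.mem_powerset.1 hY
      have hcUY : c ∉ U ∪ Y := by
        intro h
        rcases Finset.mem_union.1 h with h | h
        · exact hcU h
        · exact hc (hYV' h)
      have hcUV' : c ∉ U ∪ V' := by
        intro h
        rcases Finset.mem_union.1 h with h | h
        · exact hcU h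
        · exact hc h
      have hUYS : ↑(U ∪ Y) ⊆ S := by
        intro x hx
        rcases Finset.mem_union.1 (Finset.mem_coe.1 hx) with h | h
        · exact hU (Finset.mem_coe.2 h)
        · exact hV' (Finset.mem_coe.2 (hYV' h))
      have hUV'S : ↑(U ∪ V') ⊆ S := by
        intro x hx
        rcases Finset.mem_union.1 (Finset.mem_coe.1 hx) with h | h
        · exact hU (Finset.mem_coe.2 h)
        · exact hV' (Finset.mem_coe.2 h)
      rw [Finset.union_insert, Finset.union_insert]
      exact E.step hf hUYS hUV'S hcS hcUY hcUV'
    rw [Finset.sum_congr rfl hpt]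
    exact ih U hUV' hU hV'

end EffectAlgebra
end CSM

/-- A strong compatibility support mapping is determined by its `D`:
if `U ∩ V ≠ ∅` then `⟨U|V⟩ = D(U,U)`, and if `U ∩ V = ∅` then
`⟨U|V⟩ = ⊕_{∅ ≠ Y ⊆ V} D(U∪Y, U∪V)`. -/
theorem strongCSM_eq_D_sum {α : Type u} [DecidableEq α] (E : EffectAlgebra α)
    (S : Set α) (f : Finset α → Finset α → α) (hf : E.IsStrongCSM S f)
    (U V : Finset α) (hU : ↑U ⊆ S) (hV : ↑V ⊆ S) :
    (U ∩ V ≠ ∅ → f U V = E.Dmap f U U) ∧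
    (U ∩ V = ∅ →
      E.osum (((V.powerset.erase ∅).toList).map
        (fun Y => E.Dmap f (U ∪ Y) (U ∪ V))) = some (f U V)) := by
  constructor
  · -- U ∩ V ≠ ∅
    intro hne
    obtain ⟨h1S, hmono, hle1, hempty, hsingle, hstar⟩ := hf
    obtain ⟨c, hc⟩ := Finset.nonempty_iff_ne_empty.2 hne
    have hcU : c ∈ U := (Finset.mem_inter.1 hc).1
    have hcV : c ∈ V := (Finset.mem_inter.1 hc).2
    have hcS : c ∈ S := hU (Finset.mem_coe.2 hcU)
    have hVe : ↑(V.erase c) ⊆ S := EffectAlgebra.coe_sub (Finset.erase_subset c V) hV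
    have hstar' := hstar U (V.erase c) c hU hVe hcS
    rw [Finset.insert_eq_self.2 hcU, Finset.insert_erase hcV] at hstar'
    have hle1' : E.le (f U (V.erase c)) (f U {E.one}) := hle1 U (V.erase c) hU hVe
    have hleV : E.le (f U (V.erase c)) (f U V) :=
      hmono U (V.erase c) V hU hVe hV (Finset.erase_subset c V)
    have h1 := E.sub_spec hle1'
    have h2 := E.sub_spec hleV
    rw [hstar'] at h1
    have hfUV : f U {E.one} = f U V := Option.some.inj ((h1.symm).trans h2)
    rw [E.Dmap_self ⟨h1S, hmono, hle1, hempty, hsingle, hstar⟩ hU, hfUV]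
  · -- U ∩ V = ∅
    intro hUV
    letI := E.oMonoid
    rw [E.osum_eq_sum, List.map_map, Finset.sum_map_toList]
    have hmem : (∅ : Finset α) ∈ V.powerset := Finset.empty_mem_powerset V
    have hsum := E.sumA hf V U hUV hU hV
    rw [← Finset.add_sum_erase _ _ hmem, Finset.union_empty] at hsum
    have hrem := E.remainder hf hUV hU hV
    have hrem' : E.add (E.Dmap f U (U ∪ V)) (f U V) = some (f U {E.one}) :=
      (E.add_comm _ _).trans hrem
    rcases hs : ∑ Y ∈ V.powerset.erase ∅,
        (some (E.Dmap f (U ∪ Y) (U ∪ V)) : Option α) with _ | x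
    · rw [hs] at hsum
      exact (Option.some_ne_none _ (show (none : Option α) = some (f U {E.one}) from hsum).symm).elim
    · rw [hs] at hsum
      have hadd : E.add (E.Dmap f U (U ∪ V)) x = some (f U {E.one}) := hsum
      have hx : x = f U V := E.cancel hadd hrem'
      show (∑ Y ∈ V.powerset.erase ∅, (some (E.Dmap f (U ∪ Y) (U ∪ V)) : Option α)) =
        some (f U V)
      rw [hs, hx]
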